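/- Let ρ_AB be a two-qubit X-state with ρ₁₁ ≥ ρ₂₂ ≥ ρ₄₄ > ρ₃₃, and let U be the permutation unitary swapping basis vectors |10⟩ and |11⟩. Then the reduced states of ρ̃ = UρU† satisfy C(ρ̃_A; H_A) ≥ C(ρ_A; H_A) and C(ρ̃_B; H_B) ≥ C(ρ_B; H_B), i.e., subsystem capacity gain is achieved. -/

import Mathlib

open Matrix Finset
open scoped Kronecker

/-- Sort a finite real vector in descending order. -/
noncomputable def dsort {d : ℕ} (v : Fin d → ℝ) : Fin d → ℝ :=
  fun i => v (Tuple.sort v i.rev)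

/-- Battery capacity functional for descending-ordered vectors:
`cap λ ε = ∑ i, ε i * (λ i - λ (d-1-i))`. -/
noncomputable def cap {d : ℕ} (lam eps : Fin d → ℝ) : ℝ :=
  ∑ i, eps i * (lam i - lam i.rev)

/-- Eigenvalues of a Hermitian matrix, in descending order. -/
noncomputable def eigsDesc {m : Type*} [Fintype m] [DecidableEq m] {A : Matrix m m ℂ}
    (hA : A.IsHermitian) : Fin (Fintype.card m) → ℝ :=
  dsort (hA.eigenvalues ∘ (Fintype.equivFin m).symm)

open scoped Classical in
/-- Quantum battery capacity `C(ρ; H)` (defaults to `0` on non-Hermitian inputs). -/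
noncomputable def Cap {m : Type*} [Fintype m] [DecidableEq m] (ρ H : Matrix m m ℂ) : ℝ :=
  if hρ : ρ.IsHermitian then
    if hH : H.IsHermitian then cap (eigsDesc hρ) (eigsDesc hH) else 0
  else 0

/-- Majorization `x ≺ y` of real vectors. -/
noncomputable def Maj {d : ℕ} (x y : Fin d → ℝ) : Prop :=
  (∀ k : ℕ, ∑ i : Fin d, (if (i : ℕ) < k then dsort x i else 0)
      ≤ ∑ i : Fin d, (if (i : ℕ) < k then dsort y i else 0)) ∧
  ∑ i, x i = ∑ i, y i

def σ1 : Matrix (Fin 2) (Fin 2) ℂ := !![0, 1; 1, 0]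
def σ3 : Matrix (Fin 2) (Fin 2) ℂ := !![1, 0; 0, -1]

open scoped ComplexOrder

/-- Partial trace over the second qubit. -/
noncomputable def ptA (ρ : Matrix (Fin 2 × Fin 2) (Fin 2 × Fin 2) ℂ) :
    Matrix (Fin 2) (Fin 2) ℂ :=
  fun a c => ∑ b : Fin 2, ρ (a, b) (c, b)

/-- Partial trace over the first qubit. -/
noncomputable def ptB (ρ : Matrix (Fin 2 × Fin 2) (Fin 2 × Fin 2) ℂ) :
    Matrix (Fin 2) (Fin 2) ℂ :=
  fun b d => ∑ a : Fin 2, ρ (a, b) (a, d)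

/-- The permutation unitary swapping the basis vectors `|10⟩` and `|11⟩`. -/
noncomputable def Uswap : Matrix (Fin 2 × Fin 2) (Fin 2 × Fin 2) ℂ :=
  fun i j => if i = Equiv.swap ((1 : Fin 2), (0 : Fin 2)) ((1 : Fin 2), (1 : Fin 2)) j
    then 1 else 0
-- AUX
lemma fin2cases (i : Fin 2) : i = 0 ∨ i = 1 := by omega

lemma dsort_two (v : Fin 2 → ℝ) : dsort v 0 = max (v 0) (v 1) ∧ dsort v 1 = min (v 0) (v 1) := by
  have hm := Tuple.monotone_sort v
  set π := Tuple.sort v with hπ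
  have h01 : v (π 0) ≤ v (π 1) := hm (by norm_num : (0:Fin 2) ≤ 1)
  have hne : π 0 ≠ π 1 := fun h => by simpa using π.injective h
  have hd0 : dsort v 0 = v (π 1) := rfl
  have hd1 : dsort v 1 = v (π 0) := rfl
  rcases fin2cases (π 0) with h0 | h0 <;> rcases fin2cases (π 1) with h1 | h1 <;>
    rw [h0, h1] at h01 hne <;> rw [hd0, hd1, h0, h1]
  · exact absurd rfl hne
  · exact ⟨(max_eq_right h01).symm, (min_eq_left h01).symm⟩
  · exact ⟨(max_eq_left h01).symm, (min_eq_right h01).symm⟩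
  · exact absurd rfl hne

lemma cap_two (lam eps : Fin 2 → ℝ) : cap lam eps = (eps 0 - eps 1) * (lam 0 - lam 1) := by
  have : cap lam eps = eps 0 * (lam 0 - lam 1) + eps 1 * (lam 1 - lam 0) := by
    simp [cap, Fin.sum_univ_two]
  rw [this]; ring

lemma trace_eq_sum_eigs {A : Matrix (Fin 2) (Fin 2) ℂ} (hA : A.IsHermitian) :
    A.trace = ∑ i, (hA.eigenvalues i : ℂ) := by
  conv_lhs => rw [hA.spectral_theorem]
  rw [Unitary.conjStarAlgAut_apply, Matrix.trace_mul_cycle]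
  have : (star (hA.eigenvectorUnitary : Matrix (Fin 2) (Fin 2) ℂ)) *
      (hA.eigenvectorUnitary : Matrix (Fin 2) (Fin 2) ℂ) = 1 :=
    Matrix.mem_unitaryGroup_iff'.mp hA.eigenvectorUnitary.2
  rw [this, Matrix.one_mul, Matrix.trace_diagonal]
  rfl

lemma gap_eq {A : Matrix (Fin 2) (Fin 2) ℂ} (hA : A.IsHermitian) :
    eigsDesc hA 0 - eigsDesc hA 1 = Real.sqrt (A.trace.re ^ 2 - 4 * A.det.re) := by
  set e := hA.eigenvalues with he
  have hsum : A.trace.re = e 0 + e 1 := by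
    rw [trace_eq_sum_eigs hA, Fin.sum_univ_two]
    push_cast
    simp
    rfl
  have hdet : A.det.re = e 0 * e 1 := by
    rw [hA.det_eq_prod_eigenvalues, Fin.prod_univ_two]
    push_cast
    simp
    rfl
  have harg : A.trace.re ^ 2 - 4 * A.det.re = (e 0 - e 1) ^ 2 := by rw [hsum, hdet]; ring
  rw [harg, Real.sqrt_sq_eq_abs]
  set σ := (Fintype.equivFin (Fin 2)).symm with hσ
  have h := dsort_two (e ∘ σ)
  have hgap : eigsDesc hA 0 - eigsDesc hA 1 = |(e ∘ σ) 0 - (e ∘ σ) 1| := by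
    show dsort (e ∘ σ) 0 - dsort (e ∘ σ) 1 = _
    erw [h.1, h.2, max_sub_min_eq_abs]
    exact abs_sub_comm _ _
  rw [hgap]
  have hne : σ 0 ≠ σ 1 := fun hc => by simpa using σ.injective hc
  rcases fin2cases (σ 0) with h0 | h0 <;> rcases fin2cases (σ 1) with h1 | h1 <;>
    simp only [Function.comp_apply, h0, h1] at hne ⊢ <;>
    first
      | exact absurd rfl hne
      | rfl
      | exact abs_sub_comm _ _

lemma sigma3_herm (ε : ℝ) : (((ε : ℂ)) • σ3).IsHermitian := by
  unfold Matrix.IsHermitian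
  ext i j
  fin_cases i <;> fin_cases j <;>
    simp [σ3, Matrix.conjTranspose_apply, Matrix.smul_apply, Complex.ext_iff]

lemma Cap_sigma3 (M : Matrix (Fin 2) (Fin 2) ℂ) (hM : M.IsHermitian) (ε : ℝ) (hε : 0 ≤ ε) :
    Cap M ((ε : ℂ) • σ3) = 2 * ε * Real.sqrt (M.trace.re ^ 2 - 4 * M.det.re) := by
  unfold Cap
  rw [dif_pos hM, dif_pos (sigma3_herm ε)]
  erw [cap_two, gap_eq hM, gap_eq (sigma3_herm ε)]
  have htr : ((ε : ℂ) • σ3).trace = 0 := by simp [σ3, Matrix.trace_fin_two]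
  have hdet : ((ε : ℂ) • σ3).det = -(ε^2 : ℝ) := by
    simp [Matrix.det_fin_two, σ3]; push_cast; ring
  rw [htr, hdet]
  have : (0:ℝ)^2 - 4 * ((-(ε^2:ℝ) : ℂ) : ℂ).re = (2*ε)^2 := by
    rw [Complex.neg_re, Complex.ofReal_re]; ring
  simp only [Complex.zero_re] at *
  rw [this, Real.sqrt_sq (by positivity)]

lemma ptA_herm {ρ : Matrix (Fin 2 × Fin 2) (Fin 2 × Fin 2) ℂ} (h : ρ.IsHermitian) :
    (ptA ρ).IsHermitian := by
  ext i j
  simp only [Matrix.conjTranspose_apply, ptA, star_sum]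
  exact Finset.sum_congr rfl fun b _ => h.apply _ _

lemma ptB_herm {ρ : Matrix (Fin 2 × Fin 2) (Fin 2 × Fin 2) ℂ} (h : ρ.IsHermitian) :
    (ptB ρ).IsHermitian := by
  ext i j
  simp only [Matrix.conjTranspose_apply, ptB, star_sum]
  exact Finset.sum_congr rfl fun b _ => h.apply _ _

/-- Theorem 2: the swap unitary achieves subsystem capacity gain for a
two-qubit X-state with `ρ₁₁ ≥ ρ₂₂ ≥ ρ₄₄ > ρ₃₃`. -/
theorem capacity_gain_by_swap (ρ : Matrix (Fin 2 × Fin 2) (Fin 2 × Fin 2) ℂ)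
    (hρ : ρ.PosSemidef) (htr : ρ.trace = 1)
    (hX : ∀ i j : Fin 2 × Fin 2, ρ i j ≠ 0 → i = j ∨ (i.1 ≠ j.1 ∧ i.2 ≠ j.2))
    (hord1 : (ρ (0, 0) (0, 0)).re ≥ (ρ (0, 1) (0, 1)).re)
    (hord2 : (ρ (0, 1) (0, 1)).re ≥ (ρ (1, 1) (1, 1)).re)
    (hord3 : (ρ (1, 1) (1, 1)).re > (ρ (1, 0) (1, 0)).re)
    (eA eB : ℝ) (hA : 0 ≤ eA) (hB : 0 ≤ eB) :
    Cap (ptA (Uswap * ρ * Uswapᴴ)) ((eA : ℂ) • σ3) ≥ Cap (ptA ρ) ((eA : ℂ) • σ3) ∧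
    Cap (ptB (Uswap * ρ * Uswapᴴ)) ((eB : ℂ) • σ3) ≥ Cap (ptB ρ) ((eB : ℂ) • σ3) := by
  have hherm : ρ.IsHermitian := hρ.1
  set s := Equiv.swap ((1 : Fin 2), (0 : Fin 2)) ((1 : Fin 2), (1 : Fin 2)) with hs
  have hU : ∀ i j, Uswap i j = if j = s i then 1 else 0 := by
    intro i j
    unfold Uswap
    by_cases h : j = s i
    · rw [if_pos]
      · rw [if_pos h]
      · rw [h, ← hs, Equiv.swap_apply_self]
    · rw [if_neg]
      · rw [if_neg h]
      · intro hc
        exact h (by rw [hc, ← hs, Equiv.swap_apply_self])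
  have hswap : ∀ i j, (Uswap * ρ * Uswapᴴ) i j = ρ (s i) (s j) := by
    intro i j
    rw [Matrix.mul_apply]
    have h1 : ∀ k, (Uswap * ρ) i k = ρ (s i) k := by
      intro k
      rw [Matrix.mul_apply]
      simp [hU, ite_mul]
    simp only [h1, Matrix.conjTranspose_apply, hU]
    simp [apply_ite, mul_ite]
  have hrt : (Uswap * ρ * Uswapᴴ).IsHermitian := by
    show _ᴴ = _
    rw [Matrix.conjTranspose_mul, Matrix.conjTranspose_mul,
      Matrix.conjTranspose_conjTranspose, hherm.eq, Matrix.mul_assoc]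
  have hs00 : s ((0:Fin 2), (0:Fin 2)) = (0, 0) := by decide
  have g1 : s 0 = 0 := by decide
  have g2 : s 1 = ((1:Fin 2), (0:Fin 2)) := by decide
  have g3 : s ((1:Fin 2), (0:Fin 2)) = 1 := by decide
  have g4 : s ((0:Fin 2), (1:Fin 2)) = ((0:Fin 2), (1:Fin 2)) := by decide
  have hs01 : s ((0:Fin 2), (1:Fin 2)) = (0, 1) := by decide
  have hs10 : s ((1:Fin 2), (0:Fin 2)) = (1, 1) := by decide
  have hs11 : s ((1:Fin 2), (1:Fin 2)) = (1, 0) := by decide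
  have hz : ∀ i j : Fin 2 × Fin 2, i ≠ j → (i.1 = j.1 ∨ i.2 = j.2) → ρ i j = 0 := by
    intro i j hne hor
    by_contra h
    rcases hX i j h with h' | h'
    · exact hne h'
    · rcases hor with h2 | h2
      · exact h'.1 h2
      · exact h'.2 h2
  have hdiag : ∀ i, ρ i i = ((ρ i i).re : ℂ) :=
    fun i => (Complex.conj_eq_iff_re.mp (hherm.apply i i)).symm
  -- entries of reduced matrices
  have eA00 : ptA ρ 0 0 = ρ (0,0) (0,0) + ρ (0,1) (0,1) := by
    simp [ptA, Fin.sum_univ_two]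
  have eA11 : ptA ρ 1 1 = ρ (1,0) (1,0) + ρ (1,1) (1,1) := by
    simp [ptA, Fin.sum_univ_two]
  have eA01 : ptA ρ 0 1 = 0 := by
    simp only [ptA, Fin.sum_univ_two]
    rw [hz (0,0) (1,0) (by decide) (Or.inr rfl), hz (0,1) (1,1) (by decide) (Or.inr rfl)]
    ring
  have eA10 : ptA ρ 1 0 = 0 := by
    simp only [ptA, Fin.sum_univ_two]
    rw [hz (1,0) (0,0) (by decide) (Or.inr rfl), hz (1,1) (0,1) (by decide) (Or.inr rfl)]
    ring
  have fA00 : ptA (Uswap * ρ * Uswapᴴ) 0 0 = ρ (0,0) (0,0) + ρ (0,1) (0,1) := by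
    simp [ptA, Fin.sum_univ_two, hswap, hs00, hs01, g1, g2, g3, g4]
  have fA11 : ptA (Uswap * ρ * Uswapᴴ) 1 1 = ρ (1,1) (1,1) + ρ (1,0) (1,0) := by
    simp [ptA, Fin.sum_univ_two, hswap, hs10, hs11, g1, g2, g3, g4]
  have fA01 : ptA (Uswap * ρ * Uswapᴴ) 0 1 = ρ (0,0) (1,1) + ρ (0,1) (1,0) := by
    simp [ptA, Fin.sum_univ_two, hswap, hs00, hs01, hs10, hs11, g1, g2, g3, g4]
  have fA10 : ptA (Uswap * ρ * Uswapᴴ) 1 0 = star (ρ (0,0) (1,1) + ρ (0,1) (1,0)) := by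
    rw [← fA01]
    exact ((ptA_herm hrt).apply 1 0).symm ▸ rfl
  have eB00 : ptB ρ 0 0 = ρ (0,0) (0,0) + ρ (1,0) (1,0) := by
    simp [ptB, Fin.sum_univ_two]
  have eB11 : ptB ρ 1 1 = ρ (0,1) (0,1) + ρ (1,1) (1,1) := by
    simp [ptB, Fin.sum_univ_two]
  have eB01 : ptB ρ 0 1 = 0 := by
    simp only [ptB, Fin.sum_univ_two]
    rw [hz (0,0) (0,1) (by decide) (Or.inl rfl), hz (1,0) (1,1) (by decide) (Or.inl rfl)]
    ring
  have eB10 : ptB ρ 1 0 = 0 := by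
    simp only [ptB, Fin.sum_univ_two]
    rw [hz (0,1) (0,0) (by decide) (Or.inl rfl), hz (1,1) (1,0) (by decide) (Or.inl rfl)]
    ring
  have fB00 : ptB (Uswap * ρ * Uswapᴴ) 0 0 = ρ (0,0) (0,0) + ρ (1,1) (1,1) := by
    simp [ptB, Fin.sum_univ_two, hswap, hs00, hs10, g1, g2, g3, g4]
  have fB11 : ptB (Uswap * ρ * Uswapᴴ) 1 1 = ρ (0,1) (0,1) + ρ (1,0) (1,0) := by
    simp [ptB, Fin.sum_univ_two, hswap, hs01, hs11, g1, g2, g3, g4]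
  have fB01 : ptB (Uswap * ρ * Uswapᴴ) 0 1 = 0 := by
    simp only [ptB, Fin.sum_univ_two, hswap, hs00, hs01, hs10, hs11, g1, g2, g3, g4]
    rw [hz (0,0) (0,1) (by decide) (Or.inl rfl), hz (1,1) (1,0) (by decide) (Or.inl rfl)]
    ring
  have fB10 : ptB (Uswap * ρ * Uswapᴴ) 1 0 = 0 := by
    simp only [ptB, Fin.sum_univ_two, hswap, hs00, hs01, hs10, hs11, g1, g2, g3, g4]
    rw [hz (0,1) (0,0) (by decide) (Or.inl rfl), hz (1,0) (1,1) (by decide) (Or.inl rfl)]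
    ring
  constructor
  · -- subsystem A
    rw [Cap_sigma3 _ (ptA_herm hherm) eA hA, Cap_sigma3 _ (ptA_herm hrt) eA hA]
    have htrA : (ptA (Uswap * ρ * Uswapᴴ)).trace = (ptA ρ).trace := by
      rw [Matrix.trace_fin_two, Matrix.trace_fin_two, eA00, eA11, fA00, fA11]
      ring
    have hdetA : (ptA (Uswap * ρ * Uswapᴴ)).det.re ≤ (ptA ρ).det.re := by
      rw [Matrix.det_fin_two, Matrix.det_fin_two, eA00, eA11, eA01, eA10, fA00, fA11, fA01, fA10]
      set z := ρ (0,0) (1,1) + ρ (0,1) (1,0) with hzz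
      have : z * star z = ((Complex.normSq z : ℝ) : ℂ) := by
        rw [Complex.star_def, Complex.mul_conj]
      rw [this]
      have h1 : (ρ (1,1) (1,1) + ρ (1,0) (1,0)) = (ρ (1,0) (1,0) + ρ (1,1) (1,1)) := by ring
      rw [h1]
      simp only [Complex.sub_re, Complex.ofReal_re, mul_zero, zero_mul, Complex.zero_re, sub_zero]
      linarith [Complex.normSq_nonneg z]
    apply mul_le_mul_of_nonneg_left _ (by linarith : (0:ℝ) ≤ 2 * eA)
    apply Real.sqrt_le_sqrt
    rw [htrA]
    linarith
  · -- subsystem B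
    rw [Cap_sigma3 _ (ptB_herm hherm) eB hB, Cap_sigma3 _ (ptB_herm hrt) eB hB]
    have htrB : (ptB (Uswap * ρ * Uswapᴴ)).trace = (ptB ρ).trace := by
      rw [Matrix.trace_fin_two, Matrix.trace_fin_two, eB00, eB11, fB00, fB11]
      ring
    have hdetB : (ptB (Uswap * ρ * Uswapᴴ)).det.re ≤ (ptB ρ).det.re := by
      rw [Matrix.det_fin_two, Matrix.det_fin_two, eB00, eB11, eB01, eB10, fB00, fB11, fB01, fB10]
      rw [hdiag (0,0), hdiag (0,1), hdiag (1,0), hdiag (1,1)]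
      set a := (ρ (0,0) (0,0)).re
      set b := (ρ (0,1) (0,1)).re
      set c := (ρ (1,0) (1,0)).re
      set d := (ρ (1,1) (1,1)).re
      push_cast
      simp only [mul_zero, sub_zero]
      rw [← Complex.ofReal_add, ← Complex.ofReal_add, ← Complex.ofReal_add, ← Complex.ofReal_add,
        ← Complex.ofReal_mul, ← Complex.ofReal_mul, Complex.ofReal_re, Complex.ofReal_re]
      nlinarith [mul_nonneg (sub_nonneg.mpr hord1) (le_of_lt (sub_pos.mpr hord3))]
    apply mul_le_mul_of_nonneg_left _ (by linarith : (0:ℝ) ≤ 2 * eB)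
    apply Real.sqrt_le_sqrt
    rw [htrB]
    linarith
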